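/- For every positive integer n, the sum over i from 1 to n of 2 q^{i-1} ((1-q^{i-1})/(1-q))^2 · ((1-q^{i-2})/(1-q) + (1-q^i)/(1-q)) equals (2q + 2q^2) times the square of the q-binomial coefficient [n choose 2]_q. -/

import Mathlib

/-- The field of rational functions in q over ℚ. -/
noncomputable def q : RatFunc ℚ := RatFunc.X

lemma hq0 : q ≠ 0 := RatFunc.X_ne_zero

lemma hqC (c : ℚ) : q ≠ algebraMap ℚ (RatFunc ℚ) c := by
  intro h
  have h2 : algebraMap (Polynomial ℚ) (RatFunc ℚ) Polynomial.X
      = algebraMap (Polynomial ℚ) (RatFunc ℚ) (Polynomial.C c) := by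
    rw [RatFunc.algebraMap_X, RatFunc.algebraMap_C]
    rw [eq_ratCast RatFunc.C c]
    rw [eq_ratCast (algebraMap ℚ (RatFunc ℚ)) c] at h
    exact h
  have h3 := RatFunc.algebraMap_injective (K := ℚ) h2
  have := congrArg Polynomial.natDegree h3
  simp [Polynomial.natDegree_X, Polynomial.natDegree_C] at this

lemma hq1 : (1 : RatFunc ℚ) - q ≠ 0 := by
  intro h
  exact hqC 1 (by rw [map_one]; linear_combination -h)

lemma hq2 : (1 : RatFunc ℚ) - q ^ 2 ≠ 0 := by
  intro h
  have : (1 - q) * (1 + q) = 0 := by linear_combination h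
  rcases mul_eq_zero.mp this with h' | h'
  · exact hq1 h'
  · exact hqC (-1) (by rw [map_neg, map_one]; linear_combination h')

set_option maxHeartbeats 1000000 in
theorem forster_garrett_jacobsen_wood_q_analogue (n : ℕ) (hn : 0 < n) :
    (∑ i ∈ Finset.Icc 1 n,
        2 * q ^ ((i : ℤ) - 1) * ((1 - q ^ ((i : ℤ) - 1)) / (1 - q)) ^ 2 *
          ((1 - q ^ ((i : ℤ) - 2)) / (1 - q) + (1 - q ^ (i : ℤ)) / (1 - q)))
      = (2 * q + 2 * q ^ 2) *
          ((1 - q ^ (n : ℤ)) * (1 - q ^ ((n : ℤ) - 1)) / ((1 - q) * (1 - q ^ 2))) ^ 2 := by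
  induction n, hn using Nat.le_induction with
  | base => simp
  | succ n hn ih =>
    rw [Finset.sum_Icc_succ_top (by omega : 1 ≤ n + 1), ih]
    push_cast
    have h2 : q ^ ((n : ℤ) + 1 - 1) = q ^ (n : ℤ) := by ring_nf
    have h3 : (n : ℤ) + 1 - 2 = (n : ℤ) - 1 := by ring
    rw [h2, h3, zpow_add_one₀ hq0, zpow_sub_one₀ hq0]
    have hx : q ^ (n : ℤ) ≠ 0 := zpow_ne_zero _ hq0
    have h0 := hq0
    have h1 := hq1
    have hq2' := hq2
    generalize q ^ (n : ℤ) = x at hx ⊢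
    have e : 1 - x * q⁻¹ = (q - x) / q := by field_simp
    have hD : (q * ((1 - q) * (1 - q ^ 2))) ^ 2 * ((1 - q) ^ 2 * (q * (1 - q) * (1 - q))) ≠ 0 :=
      mul_ne_zero (pow_ne_zero _ (mul_ne_zero h0 (mul_ne_zero h1 hq2')))
        (mul_ne_zero (pow_ne_zero _ h1) (mul_ne_zero (mul_ne_zero h0 h1) h1))
    rw [e]
    field_simp
    ring
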